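/- Let F be a complete field of characteristic zero with non-Archimedean absolute value, K its valuation ring, and a_0, ..., a_m ∈ K with |a_0| = 1 and |a_i| < 1 for 1 ≤ i ≤ m. Let E(x) = Σ_{k≥0} c_k (-1)^k k! x^{-k-1} be the fundamental solution, where (c_k) are the coefficients of (a_m t^m + ... + a_0)^{-1}. Then for every f ∈ K[[x]], the convolution w = E * f = Σ_{i≥0} c_i f^{(i)} is the unique solution in K[[x]] of a_m w^{(m)} + ... + a_1 w' + a_0 w = f. -/

import Mathlib

open PowerSeries Finset Function Filter

lemma FS.coeff_iter_deriv {F : Type*} [Field F] [CharZero F] (p : PowerSeries F) (i k : ℕ) :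
    PowerSeries.coeff k (PowerSeries.derivativeFun^[i] p)
      = ((i + k).descFactorial i : F) * PowerSeries.coeff (i + k) p := by
  induction i generalizing p k with
  | zero => simp
  | succ i ih =>
    rw [Function.iterate_succ_apply, ih, show (PowerSeries.coeff (i + k)) p.derivativeFun
      = PowerSeries.coeff (i + k) (d⁄dX F p) from rfl, PowerSeries.coeff_derivative]
    have h2 : i + 1 + k = (i + k) + 1 := by omega
    rw [h2, Nat.succ_descFactorial_succ]
    push_cast
    ring

lemma FS.coeff_L {F : Type*} [Field F] [CharZero F] (m : ℕ) (a : ℕ → F) (v : PowerSeries F)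
    (k : ℕ) :
    PowerSeries.coeff k (∑ i ∈ Finset.range (m + 1),
        PowerSeries.C (a i) * (PowerSeries.derivativeFun^[i] v))
      = ∑ i ∈ Finset.range (m + 1),
          a i * (((i + k).descFactorial i : F) * PowerSeries.coeff (i + k) v) := by
  rw [map_sum]
  exact Finset.sum_congr rfl fun i _ => by rw [PowerSeries.coeff_C_mul, FS.coeff_iter_deriv]

lemma FS.descFactorial_cast {F : Type*} [Field F] [CharZero F] (n k : ℕ) :
    (((n + k).descFactorial n : ℕ) : F) = ((n + k).factorial : F) / (k.factorial : F) := by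
  have h : (n + k).descFactorial n * k.factorial = (n + k).factorial := by
    rw [Nat.descFactorial_eq_factorial_mul_choose]
    have h1 := Nat.choose_mul_factorial_mul_factorial (Nat.le_add_right n k)
    have h2 : n + k - n = k := by omega
    rw [h2] at h1
    rw [← h1]
    ring
  rw [eq_div_iff (by exact_mod_cast k.factorial_ne_zero)]
  exact_mod_cast congrArg (Nat.cast (R := F)) h

/-- Over a complete non-Archimedean valued field `F` with valuation ring
`K = {s : ‖s‖ ≤ 1}`, with `‖a 0‖ = 1`, `‖a i‖ < 1` for `1 ≤ i ≤ m`, and `c` the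
coefficients of `(a_m t^m + ... + a_0)⁻¹`, for every `f ∈ K⟦x⟧` the convolution
`w = E * f = ∑_i c_i f^{(i)}` lies in `K⟦x⟧` and is the unique solution in `K⟦x⟧` of
`a_m w^{(m)} + ... + a_1 w' + a_0 w = f`. -/
theorem fundamental_solution_convolution (F : Type*) [NormedField F] [CharZero F]
    [CompleteSpace F] (hna : ∀ x y : F, ‖x + y‖ ≤ max ‖x‖ ‖y‖)
    (m : ℕ) (hm : 1 ≤ m) (a : ℕ → F) (h0 : ‖a 0‖ = 1)
    (ha : ∀ i, 1 ≤ i → i ≤ m → ‖a i‖ < 1) (c : ℕ → F)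
    (hc : PowerSeries.mk c *
      (∑ i ∈ Finset.range (m + 1), PowerSeries.monomial i (a i)) = 1)
    (f : PowerSeries F) (hf : ∀ k, ‖PowerSeries.coeff k f‖ ≤ 1) :
    (∀ k : ℕ, ‖∑' i : ℕ,
      c i * (Nat.choose (i + k) i : F) * (Nat.factorial i : F)
        * PowerSeries.coeff (i + k) f‖ ≤ 1) ∧
    (∑ i ∈ Finset.range (m + 1),
      PowerSeries.C (a i) * (PowerSeries.derivativeFun^[i]
        (PowerSeries.mk fun k => ∑' i : ℕ,
          c i * (Nat.choose (i + k) i : F) * (Nat.factorial i : F)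
            * PowerSeries.coeff (i + k) f)) = f) ∧
    ∀ v : PowerSeries F, (∀ k, ‖PowerSeries.coeff k v‖ ≤ 1) →
      ∑ i ∈ Finset.range (m + 1),
        PowerSeries.C (a i) * (PowerSeries.derivativeFun^[i] v) = f →
      v = PowerSeries.mk fun k => ∑' i : ℕ,
        c i * (Nat.choose (i + k) i : F) * (Nat.factorial i : F)
          * PowerSeries.coeff (i + k) f := by
  classical
  haveI ultra : IsUltrametricDist F :=
    IsUltrametricDist.isUltrametricDist_of_forall_norm_add_le_max_norm hna
  have hmpos : 0 < m := hm
  -- the convolution terms and the candidate solution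
  set T : ℕ → ℕ → F := fun i k =>
    c i * (Nat.choose (i + k) i : F) * (Nat.factorial i : F)
      * PowerSeries.coeff (i + k) f with hT
  have hTd : ∀ i k, T i k
      = c i * (((i + k).descFactorial i : ℕ) : F) * PowerSeries.coeff (i + k) f := by
    intro i k
    rw [hT]
    simp only
    rw [Nat.descFactorial_eq_factorial_mul_choose]
    push_cast
    ring
  set W : ℕ → F := fun k => ∑' i : ℕ, T i k with hWdef
  -- coefficient relations for c
  have hrel : ∀ n : ℕ,
      (∑ i ∈ Finset.range (m + 1), if i ≤ n then a i * c (n - i) else 0)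
        = if n = 0 then 1 else 0 := by
    intro n
    have h := congrArg (PowerSeries.coeff n) hc
    rw [mul_comm, PowerSeries.coeff_mul, PowerSeries.coeff_one,
      Finset.Nat.sum_antidiagonal_eq_sum_range_succ_mk] at h
    have hcoeffP : ∀ i : ℕ, PowerSeries.coeff i
        (∑ j ∈ Finset.range (m + 1), PowerSeries.monomial j (a j))
        = if i ∈ Finset.range (m + 1) then a i else 0 := by
      intro i
      rw [map_sum]
      simp_rw [PowerSeries.coeff_monomial]
      exact Finset.sum_ite_eq (Finset.range (m + 1)) i a
    simp_rw [hcoeffP, PowerSeries.coeff_mk, ite_mul, zero_mul] at h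
    rw [← h]
    have e1 : (∑ i ∈ Finset.range (m + 1), if i ≤ n then a i * c (n - i) else 0)
        = ∑ i ∈ (Finset.range (m + 1)).filter (fun i => i ≤ n), a i * c (n - i) :=
      (Finset.sum_filter _ _).symm
    have e2 : (∑ i ∈ Finset.range (n + 1),
          if i ∈ Finset.range (m + 1) then a i * c (n - i) else 0)
        = ∑ i ∈ (Finset.range (n + 1)).filter (fun i => i ∈ Finset.range (m + 1)),
            a i * c (n - i) :=
      (Finset.sum_filter _ _).symm
    rw [e1, e2]
    apply Finset.sum_congr _ (fun _ _ => rfl)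
    ext i
    simp only [Finset.mem_filter, Finset.mem_range]
    omega
  -- the bound `b`
  have hne : (Finset.Icc 1 m).Nonempty := ⟨1, by simp [hm]⟩
  set b : ℝ := (Finset.Icc 1 m).sup' hne (fun i => ‖a i‖) with hbdef
  have hab : ∀ i, 1 ≤ i → i ≤ m → ‖a i‖ ≤ b := fun i h1 h2 =>
    Finset.le_sup' (fun j => ‖a j‖) (Finset.mem_Icc.mpr ⟨h1, h2⟩)
  have hb0 : 0 ≤ b := le_trans (norm_nonneg (a 1)) (hab 1 le_rfl hm)
  have hb1 : b < 1 := by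
    rw [hbdef, Finset.sup'_lt_iff]
    intro i hi
    rw [Finset.mem_Icc] at hi
    exact ha i hi.1 hi.2
  -- decay of the coefficients c
  have hcb : ∀ n, ‖c n‖ ≤ b ^ (n / m) := by
    intro n
    induction n using Nat.strong_induction_on with
    | _ n ih =>
      rcases Nat.eq_zero_or_pos n with rfl | hn
      · have h := hrel 0
        rw [if_pos rfl] at h
        have hs : (∑ i ∈ Finset.range (m + 1), if i ≤ 0 then a i * c (0 - i) else 0)
            = a 0 * c 0 := by
          rw [Finset.sum_eq_single 0]
          · simp
          · intro i _ hi
            rw [if_neg (by omega)]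
          · intro hmem
            exact absurd (Finset.mem_range.mpr (by omega)) hmem
        rw [hs] at h
        have h2 := congrArg norm h
        rw [norm_mul, h0, one_mul, norm_one] at h2
        simp [h2]
      · have h := hrel n
        rw [if_neg (by omega), Finset.sum_range_succ'] at h
        simp only [Nat.zero_le, if_true, Nat.sub_zero] at h
        have h' : a 0 * c n
            = -∑ i ∈ Finset.range m, (if i + 1 ≤ n then a (i + 1) * c (n - (i + 1)) else 0) :=
          eq_neg_of_add_eq_zero_right h
        have hcn : ‖c n‖ = ‖a 0 * c n‖ := by rw [norm_mul, h0, one_mul]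
        rw [hcn, h', norm_neg]
        apply IsUltrametricDist.norm_sum_le_of_forall_le_of_nonneg (pow_nonneg hb0 _)
        intro i hi
        rw [Finset.mem_range] at hi
        by_cases hin : i + 1 ≤ n
        · rw [if_pos hin, norm_mul]
          have e1 : ‖a (i + 1)‖ ≤ b := hab _ (by omega) (by omega)
          have e2 : ‖c (n - (i + 1))‖ ≤ b ^ ((n - (i + 1)) / m) := ih _ (by omega)
          calc ‖a (i + 1)‖ * ‖c (n - (i + 1))‖ ≤ b * b ^ ((n - (i + 1)) / m) :=
                mul_le_mul e1 e2 (norm_nonneg _) hb0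
            _ = b ^ ((n - (i + 1)) / m + 1) := by rw [pow_succ]; ring
            _ ≤ b ^ (n / m) := by
                apply pow_le_pow_of_le_one hb0 hb1.le
                calc n / m ≤ ((n - (i + 1)) + m) / m := Nat.div_le_div_right (by omega)
                  _ = (n - (i + 1)) / m + 1 := Nat.add_div_right _ hmpos
        · rw [if_neg hin, norm_zero]
          positivity
  have hc1 : ∀ n, ‖c n‖ ≤ 1 := by
    intro n
    refine (hcb n).trans ?_
    calc b ^ (n / m) ≤ 1 ^ (n / m) := pow_le_pow_left₀ hb0 hb1.le _
      _ = 1 := one_pow _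
  have hnat : ∀ n : ℕ, ‖(n : F)‖ ≤ 1 := fun n => IsUltrametricDist.norm_natCast_le_one F n
  -- bounds and summability of the terms
  have hTnorm : ∀ i k, ‖T i k‖ ≤ ‖c i‖ := by
    intro i k
    rw [hTd i k, norm_mul, norm_mul]
    calc ‖c i‖ * ‖((((i + k).descFactorial i : ℕ)) : F)‖ * ‖PowerSeries.coeff (i + k) f‖
        ≤ ‖c i‖ * 1 * 1 := by
          gcongr
          · exact hnat _
          · exact hf _
      _ = ‖c i‖ := by ring
  have hsum : ∀ k, Summable (fun i => T i k) := by
    intro k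
    apply NonarchimedeanAddGroup.summable_of_tendsto_cofinite_zero
    rw [Nat.cofinite_eq_atTop]
    have hdiv : Tendsto (fun i : ℕ => i / m) atTop atTop :=
      Filter.tendsto_atTop_atTop.mpr fun N =>
        ⟨N * m, fun n hn => (Nat.le_div_iff_mul_le hmpos).mpr hn⟩
    have hbt : Tendsto (fun i : ℕ => b ^ (i / m)) atTop (nhds 0) :=
      (tendsto_pow_atTop_nhds_zero_of_lt_one hb0 hb1).comp hdiv
    exact squeeze_zero_norm (fun i => (hTnorm i k).trans (hcb i)) hbt
  -- Part 1: the coefficients of W lie in the valuation ring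
  have hW1 : ∀ k, ‖W k‖ ≤ 1 := fun k =>
    IsUltrametricDist.norm_tsum_le_of_forall_le_of_nonneg zero_le_one
      (fun i => (hTnorm i k).trans (hc1 i))
  -- the descFactorial product identity
  have hdf : ∀ i j k : ℕ,
      (((i + k).descFactorial i : ℕ) : F) * (((j + (i + k)).descFactorial j : ℕ) : F)
        = ((((i + j) + k).descFactorial (i + j) : ℕ) : F) := by
    intro i j k
    rw [FS.descFactorial_cast, FS.descFactorial_cast, FS.descFactorial_cast]
    have e : j + (i + k) = (i + j) + k := by omega
    rw [e]
    have n1 : ((k.factorial : ℕ) : F) ≠ 0 := Nat.cast_ne_zero.mpr k.factorial_ne_zero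
    have n2 : (((i + k).factorial : ℕ) : F) ≠ 0 := Nat.cast_ne_zero.mpr (i + k).factorial_ne_zero
    field_simp
  -- Part 2: W is a solution
  have hpart2 : (∑ i ∈ Finset.range (m + 1),
      PowerSeries.C (a i) * (PowerSeries.derivativeFun^[i] (PowerSeries.mk W))) = f := by
    ext k
    rw [FS.coeff_L]
    simp only [PowerSeries.coeff_mk]
    have key : ∀ i, a i * ((((i + k).descFactorial i : ℕ) : F) * W (i + k))
        = ∑' n : ℕ, (if i ≤ n then a i * c (n - i) * (((n + k).descFactorial n : ℕ) : F)
            * PowerSeries.coeff (n + k) f else 0) := by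
      intro i
      have hWik : W (i + k) = ∑' j : ℕ, T j (i + k) := rfl
      rw [hWik, ← tsum_mul_left, ← tsum_mul_left]
      have hptwise : ∀ j : ℕ,
          a i * ((((i + k).descFactorial i : ℕ) : F) * T j (i + k))
          = (fun n : ℕ => if i ≤ n then a i * c (n - i) * (((n + k).descFactorial n : ℕ) : F)
              * PowerSeries.coeff (n + k) f else 0) (i + j) := by
        intro j
        simp only
        rw [if_pos (by omega : i ≤ i + j)]
        have e0 : i + j - i = j := by omega
        rw [e0, hTd j (i + k)]
        have e1 : j + (i + k) = (i + j) + k := by omega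
        calc a i * ((((i + k).descFactorial i : ℕ) : F)
              * (c j * (((j + (i + k)).descFactorial j : ℕ) : F)
                * PowerSeries.coeff (j + (i + k)) f))
            = a i * c j * ((((i + k).descFactorial i : ℕ) : F)
                * (((j + (i + k)).descFactorial j : ℕ) : F))
                * PowerSeries.coeff (j + (i + k)) f := by ring
          _ = a i * c j * (((((i + j) + k)).descFactorial (i + j) : ℕ) : F)
                * PowerSeries.coeff ((i + j) + k) f := by rw [hdf i j k, e1]
      rw [tsum_congr hptwise]
      apply Function.Injective.tsum_eq (g := fun j : ℕ => i + j)
        (f := fun n : ℕ => if i ≤ n then a i * c (n - i) * (((n + k).descFactorial n : ℕ) : F)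
          * PowerSeries.coeff (n + k) f else 0)
      · intro x y hxy
        simpa using hxy
      · intro n hn
        by_cases hin : i ≤ n
        · exact ⟨n - i, by simp only; omega⟩
        · exact absurd (if_neg hin) (Function.mem_support.mp hn)
    rw [Finset.sum_congr rfl (fun i _ => key i)]
    have hsummA : ∀ i ∈ Finset.range (m + 1),
        Summable (fun n : ℕ => if i ≤ n then a i * c (n - i)
          * (((n + k).descFactorial n : ℕ) : F) * PowerSeries.coeff (n + k) f else 0) := by
      intro i hi
      rw [Finset.mem_range] at hi
      apply NonarchimedeanAddGroup.summable_of_tendsto_cofinite_zero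
      rw [Nat.cofinite_eq_atTop]
      have hdiv : Tendsto (fun n : ℕ => (n - i) / m) atTop atTop :=
        Filter.tendsto_atTop_atTop.mpr fun N =>
          ⟨N * m + i, fun n hn => (Nat.le_div_iff_mul_le hmpos).mpr (Nat.le_sub_of_add_le hn)⟩
      have hbt : Tendsto (fun n : ℕ => b ^ ((n - i) / m)) atTop (nhds 0) :=
        (tendsto_pow_atTop_nhds_zero_of_lt_one hb0 hb1).comp hdiv
      apply squeeze_zero_norm _ hbt
      intro n
      by_cases hin : i ≤ n
      · rw [if_pos hin]
        have : ‖a i * c (n - i) * (((n + k).descFactorial n : ℕ) : F)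
            * PowerSeries.coeff (n + k) f‖ ≤ ‖c (n - i)‖ := by
          rw [norm_mul, norm_mul, norm_mul]
          calc ‖a i‖ * ‖c (n - i)‖ * ‖((((n + k).descFactorial n : ℕ)) : F)‖
                * ‖PowerSeries.coeff (n + k) f‖
              ≤ 1 * ‖c (n - i)‖ * 1 * 1 := by
                gcongr
                · rcases Nat.eq_zero_or_pos i with rfl | hipos
                  · exact le_of_eq h0
                  · exact (ha i hipos (by omega)).le
                · exact hnat _
                · exact hf _
            _ = ‖c (n - i)‖ := by ring
        exact this.trans (hcb _)
      · rw [if_neg hin, norm_zero]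
        positivity
    rw [← Summable.tsum_finsetSum hsummA]
    have hinner : ∀ n : ℕ, (∑ i ∈ Finset.range (m + 1),
        if i ≤ n then a i * c (n - i) * (((n + k).descFactorial n : ℕ) : F)
          * PowerSeries.coeff (n + k) f else 0)
        = (if n = 0 then 1 else 0) * ((((n + k).descFactorial n : ℕ) : F)
            * PowerSeries.coeff (n + k) f) := by
      intro n
      rw [← hrel n, Finset.sum_mul]
      refine Finset.sum_congr rfl fun i _ => ?_
      by_cases hin : i ≤ n
      · rw [if_pos hin, if_pos hin]
        ring
      · rw [if_neg hin, if_neg hin, zero_mul]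
    rw [tsum_congr hinner, tsum_eq_single 0 (fun n hn => by rw [if_neg hn, zero_mul])]
    simp
  -- Part 3: uniqueness
  have hpart3 : ∀ v : PowerSeries F, (∀ k, ‖PowerSeries.coeff k v‖ ≤ 1) →
      ∑ i ∈ Finset.range (m + 1),
        PowerSeries.C (a i) * (PowerSeries.derivativeFun^[i] v) = f →
      v = PowerSeries.mk W := by
    intro v hv hL
    set d : ℕ → F := fun n => PowerSeries.coeff n v - W n with hd
    have hdL : ∀ k, (∑ i ∈ Finset.range (m + 1),
        a i * ((((i + k).descFactorial i : ℕ) : F) * d (i + k))) = 0 := by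
      intro k
      have h1 := congrArg (PowerSeries.coeff k) hL
      have h2 := congrArg (PowerSeries.coeff k) hpart2
      rw [FS.coeff_L] at h1 h2
      simp only [PowerSeries.coeff_mk] at h2
      have : (∑ i ∈ Finset.range (m + 1),
          a i * ((((i + k).descFactorial i : ℕ) : F) * d (i + k)))
          = (∑ i ∈ Finset.range (m + 1),
              a i * ((((i + k).descFactorial i : ℕ) : F) * PowerSeries.coeff (i + k) v))
            - ∑ i ∈ Finset.range (m + 1),
                a i * ((((i + k).descFactorial i : ℕ) : F) * W (i + k)) := by
        rw [← Finset.sum_sub_distrib]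
        refine Finset.sum_congr rfl fun i _ => ?_
        rw [hd]
        ring
      rw [this, h1, h2, sub_self]
    have hd1 : ∀ n, ‖d n‖ ≤ 1 := by
      intro n
      rw [hd]
      simp only
      calc ‖PowerSeries.coeff n v - W n‖
          ≤ max ‖PowerSeries.coeff n v‖ ‖-(W n)‖ := by
            rw [sub_eq_add_neg]
            exact hna _ _
        _ ≤ 1 := by
            rw [norm_neg]
            exact max_le (hv n) (hW1 n)
    have hkey : ∀ N n, ‖d n‖ ≤ b ^ N := by
      intro N
      induction N with
      | zero => simpa using hd1
      | succ N ih =>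
        intro n
        have h := hdL n
        rw [Finset.sum_range_succ'] at h
        simp only [Nat.descFactorial_zero, Nat.cast_one, one_mul, zero_add] at h
        have h' : a 0 * d n = -∑ i ∈ Finset.range m,
            a (i + 1) * (((((i + 1) + n).descFactorial (i + 1) : ℕ) : F) * d ((i + 1) + n)) :=
          eq_neg_of_add_eq_zero_right h
        have hdn : ‖d n‖ = ‖a 0 * d n‖ := by rw [norm_mul, h0, one_mul]
        rw [hdn, h', norm_neg]
        apply IsUltrametricDist.norm_sum_le_of_forall_le_of_nonneg (pow_nonneg hb0 _)
        intro i hi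
        rw [Finset.mem_range] at hi
        rw [norm_mul, norm_mul]
        calc ‖a (i + 1)‖ * (‖(((((i + 1) + n).descFactorial (i + 1) : ℕ)) : F)‖
              * ‖d ((i + 1) + n)‖)
            ≤ b * (1 * b ^ N) := by
              refine mul_le_mul (hab _ (by omega) (by omega))
                (mul_le_mul (hnat _) (ih _) (norm_nonneg _) zero_le_one)
                (by positivity) hb0
          _ = b ^ (N + 1) := by rw [pow_succ]; ring
    have hd0 : ∀ n, d n = 0 := by
      intro n
      have hlim : Tendsto (fun N : ℕ => b ^ N) atTop (nhds 0) :=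
        tendsto_pow_atTop_nhds_zero_of_lt_one hb0 hb1
      have : ‖d n‖ ≤ 0 := ge_of_tendsto' hlim (fun N => hkey N n)
      simpa using le_antisymm this (norm_nonneg _)
    ext k
    rw [PowerSeries.coeff_mk]
    have := hd0 k
    rw [hd] at this
    simp only at this
    exact sub_eq_zero.mp this
  refine ⟨hW1, hpart2, hpart3⟩
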